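/- Key inequality (28)–(30, eps-lower) in the proof of Theorem 2. Under the hypotheses of Theorem 2 (optimal congruent potentials {ψₙ*}; ψₙ† differentiable convex; ψ̄ₙ‡ β-strongly convex and B-smooth differentiable convex with 0 < β ≤ B < ∞ and differentiable conjugates ψₙ‡ with (1/β)-Lipschitz gradients and mutually inverse gradients; λ > B/(2β²); τ ≥ 1 with P̄ ≤ τ·P̂ setwise), let Δ = M − Σₙ αₙ ∫ ψₙ* dPₙ where M is the regularized objective. Then Δ ≥ Σₙ αₙ (λ − B/(2β²)) · ∫ ‖∇ψ̄ₙ‡(∇ψₙ†(x)) − x‖² dPₙ(x) + (β/2) · Σₙ αₙ ∫ ‖∇ψₙ*(x) − ∇ψₙ‡(x)‖² dPₙ(x); in particular Δ ≥ 0. -/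

import Mathlib

open MeasureTheory RealInnerProductSpace

section Aux

variable {E : Type*} [NormedAddCommGroup E] [InnerProductSpace ℝ E] [CompleteSpace E]

lemma hasGradientAt_half_norm_sq (c : ℝ) (z : E) :
    HasGradientAt (fun y : E => c / 2 * ‖y‖ ^ 2) (c • z) z := by
  rw [hasGradientAt_iff_isLittleO]
  have key : ∀ y : E, c / 2 * ‖y‖ ^ 2 - c / 2 * ‖z‖ ^ 2 - ⟪c • z, y - z⟫ =
      c / 2 * ‖y - z‖ ^ 2 := by
    intro y
    rw [real_inner_smul_left, norm_sub_sq_real]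
    have h : ⟪z, y - z⟫ = ⟪y, z⟫ - ‖z‖ ^ 2 := by
      rw [inner_sub_right, ← real_inner_self_eq_norm_sq, real_inner_comm]
    rw [h]; ring
  simp only [key]
  rw [Asymptotics.isLittleO_iff]
  intro ε hε
  have hδ : (0:ℝ) < ε / (|c| / 2 + 1) := by positivity
  filter_upwards [Metric.ball_mem_nhds z hδ] with y hy
  rw [Metric.mem_ball, dist_eq_norm] at hy
  have ht0 : (0:ℝ) ≤ ‖y - z‖ := norm_nonneg _
  have habs : ‖c / 2 * ‖y - z‖ ^ 2‖ = |c| / 2 * ‖y - z‖ ^ 2 := by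
    rw [Real.norm_eq_abs, abs_mul, abs_of_nonneg (by positivity : (0:ℝ) ≤ ‖y - z‖ ^ 2),
      abs_div, abs_two]
  rw [habs]
  have h2 : |c| / 2 * ‖y - z‖ ≤ ε := by
    have h3 : (|c| / 2 + 1) * ‖y - z‖ ≤ (|c| / 2 + 1) * (ε / (|c| / 2 + 1)) := by
      apply mul_le_mul_of_nonneg_left hy.le (by positivity)
    rw [mul_div_cancel₀ _ (by positivity : (|c| / 2 + 1) ≠ 0)] at h3
    nlinarith
  calc |c| / 2 * ‖y - z‖ ^ 2 = (|c| / 2 * ‖y - z‖) * ‖y - z‖ := by ring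
    _ ≤ ε * ‖y - z‖ := mul_le_mul_of_nonneg_right h2 ht0

lemma line_hasDerivAt (z v : E) (t : ℝ) :
    HasDerivAt (fun t : ℝ => z + t • v) v t := by
  simpa using ((hasDerivAt_id t).smul_const v).const_add z

lemma comp_line_hasDerivAt {f : E → ℝ} (hd : Differentiable ℝ f) (z v : E) (t : ℝ) :
    HasDerivAt (fun t : ℝ => f (z + t • v)) ⟪gradient f (z + t • v), v⟫ t := by
  have hf' := (hd (z + t • v)).hasGradientAt.hasFDerivAt
  have h := hf'.comp_hasDerivAt t (line_hasDerivAt z v t)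
  simpa [InnerProductSpace.toDual_apply_apply, Function.comp_def] using h

/-- First-order condition for a differentiable convex function. -/
lemma convex_first_order {f : E → ℝ} (hf : ConvexOn ℝ Set.univ f)
    (hd : Differentiable ℝ f) (x y : E) :
    f x + ⟪gradient f x, y - x⟫ ≤ f y := by
  set g : ℝ → ℝ := fun t => f (x + t • (y - x)) with hg
  have hgd : ∀ t : ℝ, HasDerivAt g ⟪gradient f (x + t • (y - x)), y - x⟫ t :=
    fun t => comp_line_hasDerivAt hd x (y - x) t
  have hgc : ConvexOn ℝ Set.univ g := by
    have h := hf.comp_affineMap (AffineMap.lineMap x y : ℝ →ᵃ[ℝ] E)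
    have heq : (f ∘ (AffineMap.lineMap x y : ℝ →ᵃ[ℝ] E)) = g := by
      funext t
      simp [g, AffineMap.lineMap_apply, add_comm, Function.comp]
    rw [heq] at h
    simpa using h
  have hslope := hgc.deriv_le_slope (Set.mem_univ (0:ℝ)) (Set.mem_univ (1:ℝ))
    zero_lt_one (hgd 0).differentiableAt
  rw [(hgd 0).deriv] at hslope
  have h0 : g 0 = f x := by simp [g]
  have h1 : g 1 = f y := by simp [g]
  have hsl : slope g 0 1 = f y - f x := by
    rw [slope_def_field]; simp [h0, h1]
  rw [hsl] at hslope
  simp only [zero_smul, add_zero] at hslope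
  linarith

lemma gradient_sub_half_norm_sq {f : E → ℝ} (hd : Differentiable ℝ f) (c : ℝ) (z : E) :
    HasGradientAt (fun y : E => f y - c / 2 * ‖y‖ ^ 2) (gradient f z - c • z) z := by
  have h1 := (hd z).hasGradientAt.hasFDerivAt
  have h2 := (hasGradientAt_half_norm_sq c z).hasFDerivAt
  have h := h1.sub h2
  rw [hasGradientAt_iff_hasFDerivAt, map_sub]
  exact h

/-- First-order lower bound from `β`-strong convexity. -/
lemma strong_convex_lower {f : E → ℝ} {β : ℝ}
    (hsc : ConvexOn ℝ Set.univ (fun y => f y - β / 2 * ‖y‖ ^ 2))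
    (hd : Differentiable ℝ f) (z y : E) :
    f z + ⟪gradient f z, y - z⟫ + β / 2 * ‖y - z‖ ^ 2 ≤ f y := by
  set h : E → ℝ := fun y => f y - β / 2 * ‖y‖ ^ 2 with hh
  have hdh : Differentiable ℝ h :=
    fun w => ((hd w).hasGradientAt.hasFDerivAt.sub
      (hasGradientAt_half_norm_sq β w).hasFDerivAt).differentiableAt
  have hgrad : gradient h z = gradient f z - β • z :=
    (gradient_sub_half_norm_sq hd β z).gradient
  have hfo := convex_first_order hsc hdh z y
  rw [hgrad] at hfo
  have hinner : ⟪gradient f z - β • z, y - z⟫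
      = ⟪gradient f z, y - z⟫ - β * ⟪z, y - z⟫ := by
    rw [inner_sub_left, real_inner_smul_left]
  have hid : β / 2 * ‖y‖ ^ 2 - β / 2 * ‖z‖ ^ 2 - β * ⟪z, y - z⟫ = β / 2 * ‖y - z‖ ^ 2 := by
    rw [norm_sub_sq_real]
    have h3 : ⟪z, y - z⟫ = ⟪y, z⟫ - ‖z‖ ^ 2 := by
      rw [inner_sub_right, ← real_inner_self_eq_norm_sq, real_inner_comm]
    rw [h3]; ring
  simp only [hh] at hfo
  rw [hinner] at hfo
  linarith

/-- First-order upper bound from `B`-smoothness (Lipschitz gradient). -/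
lemma smooth_upper {f : E → ℝ} {B : ℝ} (hB : 0 ≤ B)
    (hd : Differentiable ℝ f)
    (hlip : ∀ x y, ‖gradient f x - gradient f y‖ ≤ B * ‖x - y‖)
    (z y : E) :
    f y ≤ f z + ⟪gradient f z, y - z⟫ + B / 2 * ‖y - z‖ ^ 2 := by
  set v : E := y - z with hv
  set g : ℝ → ℝ := fun t => f (z + t • v) - t * ⟪gradient f z, v⟫ - B * t ^ 2 / 2 * ‖v‖ ^ 2
    with hgdef
  have hgd : ∀ t : ℝ, HasDerivAt g
      (⟪gradient f (z + t • v), v⟫ - ⟪gradient f z, v⟫ - B * t * ‖v‖ ^ 2) t := by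
    intro t
    have h1 := comp_line_hasDerivAt hd z v t
    have h2 : HasDerivAt (fun t : ℝ => t * ⟪gradient f z, v⟫) ⟪gradient f z, v⟫ t := by
      simpa using (hasDerivAt_id t).mul_const ⟪gradient f z, v⟫
    have h3 : HasDerivAt (fun t : ℝ => B * t ^ 2 / 2 * ‖v‖ ^ 2) (B * t * ‖v‖ ^ 2) t := by
      have := (((hasDerivAt_pow 2 t).const_mul B).div_const 2).mul_const (‖v‖ ^ 2)
      refine this.congr_deriv ?_
      ring
    exact (h1.sub h2).sub h3
  have hanti : AntitoneOn g (Set.Icc 0 1) := by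
    apply antitoneOn_of_deriv_nonpos (convex_Icc 0 1)
    · exact (fun t _ => ((hgd t).differentiableAt).continuousAt.continuousWithinAt)
    · exact fun t _ => ((hgd t).differentiableAt).differentiableWithinAt
    · intro t ht
      rw [interior_Icc] at ht
      rw [(hgd t).deriv]
      have h4 : ⟪gradient f (z + t • v) - gradient f z, v⟫ ≤ B * t * ‖v‖ ^ 2 := by
        calc ⟪gradient f (z + t • v) - gradient f z, v⟫
            ≤ ‖gradient f (z + t • v) - gradient f z‖ * ‖v‖ := real_inner_le_norm _ _
          _ ≤ B * ‖(z + t • v) - z‖ * ‖v‖ := by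
              apply mul_le_mul_of_nonneg_right (hlip _ _) (norm_nonneg _)
          _ = B * t * ‖v‖ ^ 2 := by
              rw [add_sub_cancel_left, norm_smul, Real.norm_eq_abs,
                abs_of_pos ht.1]
              ring
      rw [inner_sub_left] at h4
      linarith
  have hg10 := hanti (Set.left_mem_Icc.2 zero_le_one) (Set.right_mem_Icc.2 zero_le_one)
    zero_le_one
  have hg0 : g 0 = f z := by simp [hgdef]
  have hg1 : g 1 = f y - ⟪gradient f z, v⟫ - B / 2 * ‖v‖ ^ 2 := by
    have hzy : z + (1:ℝ) • v = y := by simp [hv]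
    simp only [hgdef, hzy, one_pow, one_mul]
    ring
  rw [hg0, hg1] at hg10
  linarith

/-- Fenchel equality at the gradient for a differentiable convex function with
pointwise-defined conjugate. -/
lemma fenchel_eq {f fb : E → ℝ} (hf : ConvexOn ℝ Set.univ f) (hd : Differentiable ℝ f)
    (hconj : ∀ y, IsLUB (Set.range fun x => ⟪x, y⟫ - f x) (fb y)) (x : E) :
    fb (gradient f x) = ⟪x, gradient f x⟫ - f x := by
  apply le_antisymm
  · apply (hconj (gradient f x)).2
    rintro _ ⟨z, rfl⟩
    have h := convex_first_order hf hd x z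
    have h2 : ⟪gradient f x, z - x⟫ = ⟪z, gradient f x⟫ - ⟪x, gradient f x⟫ := by
      rw [inner_sub_right]
      rw [real_inner_comm x (gradient f x), real_inner_comm z (gradient f x)]
    rw [h2] at h
    simp only []
    linarith
  · exact (hconj (gradient f x)).1 ⟨x, rfl⟩

end Aux

lemma measurable_gradient' {D : ℕ} (f : EuclideanSpace ℝ (Fin D) → ℝ) :
    Measurable (gradient f) :=
  ((InnerProductSpace.toDual ℝ (EuclideanSpace ℝ (Fin D))).symm.continuous.measurable).comp
    (measurable_fderiv ℝ f)

/-- Key inequality (28)–(30) in the proof of Theorem 2: with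
`Δ = M − Σₙ αₙ ∫ ψₙ* dPₙ`,
`Δ ≥ Σₙ αₙ(λ − B/(2β²)) ∫ ‖∇ψ̄ₙ‡(∇ψₙ†(x)) − x‖² dPₙ
   + (β/2) Σₙ αₙ ∫ ‖∇ψₙ*(x) − ∇ψₙ‡(x)‖² dPₙ`; in particular `Δ ≥ 0`. -/
theorem theorem2_key_inequality {D N : ℕ}
    (P : Fin N → Measure (EuclideanSpace ℝ (Fin D)))
    (Pbar : Measure (EuclideanSpace ℝ (Fin D)))
    [∀ n, IsProbabilityMeasure (P n)] [IsProbabilityMeasure Pbar]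
    (α : Fin N → ℝ) (hα : ∀ n, 0 < α n) (hαsum : ∑ n, α n = 1)
    -- optimal congruent potentials ψₙ* with conjugates ψ̄ₙ*
    (ψs ψbs : Fin N → EuclideanSpace ℝ (Fin D) → ℝ)
    (hψs_conv : ∀ n, ConvexOn ℝ Set.univ (ψs n))
    (hψs_diff : ∀ n, Differentiable ℝ (ψs n))
    (hψbs_diff : ∀ n, Differentiable ℝ (ψbs n))
    (hψbs_conj : ∀ n y, IsLUB (Set.range fun x => ⟪x, y⟫ - ψs n x) (ψbs n y))
    (hpush : ∀ n, (P n).map (gradient (ψs n)) = Pbar)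
    (hsinv : ∀ n x, gradient (ψbs n) (gradient (ψs n) x) = x)
    (hcong : ∀ y, ∑ n, α n * ψbs n y = ‖y‖ ^ 2 / 2)
    (hcongGrad : ∀ y, ∑ n, α n • gradient (ψbs n) y = y)
    -- candidate potentials ψₙ† and ψ̄ₙ‡ with conjugates ψₙ‡
    (β B : ℝ) (hβ : 0 < β) (hβB : β ≤ B)
    (ψdag ψbd ψd : Fin N → EuclideanSpace ℝ (Fin D) → ℝ)
    (hψdag_conv : ∀ n, ConvexOn ℝ Set.univ (ψdag n))
    (hψdag_diff : ∀ n, Differentiable ℝ (ψdag n))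
    (hψbd_conv : ∀ n, ConvexOn ℝ Set.univ (ψbd n))
    (hψbd_diff : ∀ n, Differentiable ℝ (ψbd n))
    (hψbd_sconv : ∀ n, ConvexOn ℝ Set.univ (fun y => ψbd n y - β / 2 * ‖y‖ ^ 2))
    (hψbd_smooth : ∀ n x y, ‖gradient (ψbd n) x - gradient (ψbd n) y‖ ≤ B * ‖x - y‖)
    (hψd_diff : ∀ n, Differentiable ℝ (ψd n))
    (hψd_conj : ∀ n x, IsLUB (Set.range fun y => ⟪y, x⟫ - ψbd n y) (ψd n x))
    (hψd_lip : ∀ n x y, ‖gradient (ψd n) x - gradient (ψd n) y‖ ≤ (1 / β) * ‖x - y‖)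
    (hinv1 : ∀ n x, gradient (ψbd n) (gradient (ψd n) x) = x)
    (hinv2 : ∀ n y, gradient (ψd n) (gradient (ψbd n) y) = y)
    -- regularization parameters
    (lam : ℝ) (hlam : lam > B / (2 * β ^ 2))
    (τ : ℝ) (hτ : 1 ≤ τ)
    (Phat : Measure (EuclideanSpace ℝ (Fin D))) [IsProbabilityMeasure Phat]
    (hdom : ∀ A : Set (EuclideanSpace ℝ (Fin D)), MeasurableSet A →
      Pbar A ≤ ENNReal.ofReal τ * Phat A)
    -- integrability of the stated integrals
    (hintM1 : ∀ n, Integrable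
      (fun x => ⟪x, gradient (ψdag n) x⟫ - ψbd n (gradient (ψdag n) x)) (P n))
    (hintM2 : Integrable (fun y => max (∑ n, α n * ψbd n y - ‖y‖ ^ 2 / 2) 0) Phat)
    (hintM3 : ∀ n, Integrable
      (fun x => ‖gradient (ψbd n) (gradient (ψdag n) x) - x‖ ^ 2) (P n))
    (hint_s : ∀ n, Integrable (ψs n) (P n))
    -- the regularized objective
    (M : ℝ)
    (hM : M = (∑ n, α n * ∫ x, (⟪x, gradient (ψdag n) x⟫
          - ψbd n (gradient (ψdag n) x)) ∂(P n))
      + τ * ∫ y, max (∑ n, α n * ψbd n y - ‖y‖ ^ 2 / 2) 0 ∂Phat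
      + lam * ∑ n, α n * ∫ x, ‖gradient (ψbd n) (gradient (ψdag n) x) - x‖ ^ 2 ∂(P n))
    (hint_sd : ∀ n, Integrable
      (fun x => ‖gradient (ψs n) x - gradient (ψd n) x‖ ^ 2) (P n))
    (Δ : ℝ) (hΔ : Δ = M - ∑ n, α n * ∫ x, ψs n x ∂(P n)) :
    Δ ≥ (∑ n, α n * (lam - B / (2 * β ^ 2)) *
          ∫ x, ‖gradient (ψbd n) (gradient (ψdag n) x) - x‖ ^ 2 ∂(P n))
        + β / 2 * ∑ n, α n * ∫ x, ‖gradient (ψs n) x - gradient (ψd n) x‖ ^ 2 ∂(P n) ∧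
      Δ ≥ 0 := by
  have hB0 : (0:ℝ) ≤ B := le_trans hβ.le hβB
  set c : ℝ := B / (2 * β ^ 2) with hc
  have hc0 : 0 ≤ c := by positivity
  -- pointwise strong-convexity inequality for the conjugate pair (ψd, ψbd)
  have hA : ∀ n x y, ⟪y, x⟫ - ψbd n y + β / 2 * ‖y - gradient (ψd n) x‖ ^ 2
      ≤ ⟪gradient (ψd n) x, x⟫ - ψbd n (gradient (ψd n) x) := by
    intro n x y
    have hsc := strong_convex_lower (hψbd_sconv n) (hψbd_diff n) (gradient (ψd n) x) y
    rw [hinv1 n x] at hsc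
    have h1 : ⟪x, y - gradient (ψd n) x⟫ = ⟪y, x⟫ - ⟪gradient (ψd n) x, x⟫ := by
      rw [inner_sub_right, real_inner_comm x y, real_inner_comm x (gradient (ψd n) x)]
    rw [h1] at hsc
    linarith
  have hψd_eq : ∀ n x, ψd n x = ⟪gradient (ψd n) x, x⟫ - ψbd n (gradient (ψd n) x) := by
    intro n x
    apply le_antisymm
    · apply (hψd_conj n x).2
      rintro _ ⟨y, rfl⟩
      have h := hA n x y
      have h2 : 0 ≤ β / 2 * ‖y - gradient (ψd n) x‖ ^ 2 := by positivity
      dsimp only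
      linarith
    · exact (hψd_conj n x).1 ⟨gradient (ψd n) x, rfl⟩
  have hAd : ∀ n x y, ⟪y, x⟫ - ψbd n y + β / 2 * ‖y - gradient (ψd n) x‖ ^ 2 ≤ ψd n x := by
    intro n x y
    rw [hψd_eq n x]; exact hA n x y
  have hBd : ∀ n x y, ψd n x ≤ ⟪y, x⟫ - ψbd n y + B / 2 * ‖y - gradient (ψd n) x‖ ^ 2 := by
    intro n x y
    have hsm := smooth_upper hB0 (hψbd_diff n) (hψbd_smooth n) (gradient (ψd n) x) y
    rw [hinv1 n x] at hsm
    have h1 : ⟪x, y - gradient (ψd n) x⟫ = ⟪y, x⟫ - ⟪gradient (ψd n) x, x⟫ := by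
      rw [inner_sub_right, real_inner_comm x y, real_inner_comm x (gradient (ψd n) x)]
    rw [h1] at hsm
    rw [hψd_eq n x]
    linarith
  have hψd_geT1 : ∀ n x, ⟪x, gradient (ψdag n) x⟫ - ψbd n (gradient (ψdag n) x) ≤ ψd n x := by
    intro n x
    have h := (hψd_conj n x).1 ⟨gradient (ψdag n) x, rfl⟩
    rw [real_inner_comm]
    exact h
  have hP1 : ∀ n x, ψd n x - c * ‖gradient (ψbd n) (gradient (ψdag n) x) - x‖ ^ 2
      ≤ ⟪x, gradient (ψdag n) x⟫ - ψbd n (gradient (ψdag n) x) := by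
    intro n x
    have h1 := hBd n x (gradient (ψdag n) x)
    rw [real_inner_comm x (gradient (ψdag n) x)] at h1
    have h2 : ‖gradient (ψdag n) x - gradient (ψd n) x‖
        ≤ (1 / β) * ‖gradient (ψbd n) (gradient (ψdag n) x) - x‖ := by
      have h3 := hψd_lip n (gradient (ψbd n) (gradient (ψdag n) x)) x
      rw [hinv2 n (gradient (ψdag n) x)] at h3
      exact h3
    have h4 : ‖gradient (ψdag n) x - gradient (ψd n) x‖ ^ 2
        ≤ ((1 / β) * ‖gradient (ψbd n) (gradient (ψdag n) x) - x‖) ^ 2 :=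
      pow_le_pow_left₀ (norm_nonneg _) h2 2
    have h6 := mul_le_mul_of_nonneg_left h4 (by positivity : (0:ℝ) ≤ B / 2)
    have h7 : B / 2 * (((1 / β) * ‖gradient (ψbd n) (gradient (ψdag n) x) - x‖) ^ 2)
        = c * ‖gradient (ψbd n) (gradient (ψdag n) x) - x‖ ^ 2 := by
      rw [hc]; field_simp <;> ring
    rw [h7] at h6
    linarith
  have hψs_eq : ∀ n x, ψs n x = ⟪x, gradient (ψs n) x⟫ - ψbs n (gradient (ψs n) x) := by
    intro n x
    have h := fenchel_eq (hψs_conv n) (hψs_diff n) (hψbs_conj n) x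
    linarith
  have hP2 : ∀ n x, ψs n x + (ψbs n (gradient (ψs n) x) - ψbd n (gradient (ψs n) x))
      + β / 2 * ‖gradient (ψs n) x - gradient (ψd n) x‖ ^ 2 ≤ ψd n x := by
    intro n x
    have h1 := hAd n x (gradient (ψs n) x)
    rw [real_inner_comm x (gradient (ψs n) x)] at h1
    have h2 := hψs_eq n x
    linarith
  have hP3 : ∀ n x, ψd n x - B / 2 * ‖gradient (ψs n) x - gradient (ψd n) x‖ ^ 2
      ≤ ψs n x + (ψbs n (gradient (ψs n) x) - ψbd n (gradient (ψs n) x)) := by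
    intro n x
    have h1 := hBd n x (gradient (ψs n) x)
    rw [real_inner_comm x (gradient (ψs n) x)] at h1
    have h2 := hψs_eq n x
    linarith
  -- measurability and integrability of the comparison function G
  have hs_meas : ∀ n, Measurable (gradient (ψs n)) := fun n => measurable_gradient' _
  have hGcont : ∀ n, Continuous (fun y => ψbs n y - ψbd n y) :=
    fun n => ((hψbs_diff n).continuous).sub ((hψbd_diff n).continuous)
  have hGmeas : ∀ n, AEStronglyMeasurable
      (fun x => ψbs n (gradient (ψs n) x) - ψbd n (gradient (ψs n) x)) (P n) :=
    fun n => (((hGcont n).measurable).comp (hs_meas n)).aestronglyMeasurable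
  have hGbound : ∀ n x, ‖ψbs n (gradient (ψs n) x) - ψbd n (gradient (ψs n) x)‖
      ≤ |⟪x, gradient (ψdag n) x⟫ - ψbd n (gradient (ψdag n) x)| + |ψs n x|
        + c * ‖gradient (ψbd n) (gradient (ψdag n) x) - x‖ ^ 2
        + B / 2 * ‖gradient (ψs n) x - gradient (ψd n) x‖ ^ 2 := by
    intro n x
    rw [Real.norm_eq_abs, abs_le]
    have h1 := hP2 n x
    have h2 := hP3 n x
    have h3 := hP1 n x
    have h4 := hψd_geT1 n x
    have h5 : 0 ≤ β / 2 * ‖gradient (ψs n) x - gradient (ψd n) x‖ ^ 2 := by positivity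
    have h6 : 0 ≤ B / 2 * ‖gradient (ψs n) x - gradient (ψd n) x‖ ^ 2 := by positivity
    have h7 : 0 ≤ c * ‖gradient (ψbd n) (gradient (ψdag n) x) - x‖ ^ 2 := by positivity
    have ha1 := le_abs_self (⟪x, gradient (ψdag n) x⟫ - ψbd n (gradient (ψdag n) x))
    have ha2 := neg_abs_le (⟪x, gradient (ψdag n) x⟫ - ψbd n (gradient (ψdag n) x))
    have ha3 := le_abs_self (ψs n x)
    have ha4 := neg_abs_le (ψs n x)
    constructor
    · linarith
    · linarith
  have hGint : ∀ n, Integrable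
      (fun x => ψbs n (gradient (ψs n) x) - ψbd n (gradient (ψs n) x)) (P n) := by
    intro n
    refine Integrable.mono' ?_ (hGmeas n) (ae_of_all _ (hGbound n))
    exact (((hintM1 n).abs.add (hint_s n).abs).add ((hintM3 n).const_mul c)).add
      ((hint_sd n).const_mul (B / 2))
  -- per-n integral inequality
  have hkey : ∀ n, (∫ x, (ψbs n (gradient (ψs n) x) - ψbd n (gradient (ψs n) x)) ∂(P n))
      + β / 2 * (∫ x, ‖gradient (ψs n) x - gradient (ψd n) x‖ ^ 2 ∂(P n))
      - c * (∫ x, ‖gradient (ψbd n) (gradient (ψdag n) x) - x‖ ^ 2 ∂(P n))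
      ≤ (∫ x, (⟪x, gradient (ψdag n) x⟫ - ψbd n (gradient (ψdag n) x)) ∂(P n))
        - ∫ x, ψs n x ∂(P n) := by
    intro n
    have hiL : Integrable (fun x => (ψbs n (gradient (ψs n) x) - ψbd n (gradient (ψs n) x))
        + β / 2 * ‖gradient (ψs n) x - gradient (ψd n) x‖ ^ 2
        - c * ‖gradient (ψbd n) (gradient (ψdag n) x) - x‖ ^ 2) (P n) :=
      ((hGint n).add ((hint_sd n).const_mul (β / 2))).sub ((hintM3 n).const_mul c)
    have hiR : Integrable (fun x => (⟪x, gradient (ψdag n) x⟫ - ψbd n (gradient (ψdag n) x))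
        - ψs n x) (P n) := (hintM1 n).sub (hint_s n)
    have hmono := integral_mono hiL hiR (fun x => by
      have h1 := hP2 n x
      have h2 := hP1 n x
      dsimp only
      linarith)
    have hadd : Integrable (fun x => (ψbs n (gradient (ψs n) x) - ψbd n (gradient (ψs n) x))
        + β / 2 * ‖gradient (ψs n) x - gradient (ψd n) x‖ ^ 2) (P n) :=
      (hGint n).add ((hint_sd n).const_mul (β / 2))
    rw [integral_sub hadd ((hintM3 n).const_mul c),
      integral_add (hGint n) ((hint_sd n).const_mul (β / 2)),
      integral_const_mul, integral_const_mul,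
      integral_sub (hintM1 n) (hint_s n)] at hmono
    exact hmono
  -- pushforward identities
  have hEeq : ∀ n, (∫ x, (ψbs n (gradient (ψs n) x) - ψbd n (gradient (ψs n) x)) ∂(P n))
      = ∫ y, (ψbs n y - ψbd n y) ∂Pbar := by
    intro n
    rw [← hpush n]
    exact (integral_map (hs_meas n).aemeasurable ((hGcont n).aestronglyMeasurable)).symm
  have hGbar_int : ∀ n, Integrable (fun y => ψbs n y - ψbd n y) Pbar := by
    intro n
    rw [← hpush n]
    exact (integrable_map_measure ((hGcont n).aestronglyMeasurable)
      (hs_meas n).aemeasurable).2 (hGint n)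
  have hφint : Integrable (fun y => ‖y‖ ^ 2 / 2 - ∑ n, α n * ψbd n y) Pbar := by
    have h0 : Integrable (fun y => ∑ n, α n * (ψbs n y - ψbd n y)) Pbar :=
      integrable_finset_sum _ (fun n _ => (hGbar_int n).const_mul (α n))
    have heq : (fun y : EuclideanSpace ℝ (Fin D) => ∑ n, α n * (ψbs n y - ψbd n y))
        = fun y => ‖y‖ ^ 2 / 2 - ∑ n, α n * ψbd n y := by
      funext y
      have h : ∑ n, α n * (ψbs n y - ψbd n y) = ∑ n, (α n * ψbs n y - α n * ψbd n y) :=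
        Finset.sum_congr rfl fun n _ => by ring
      rw [h, Finset.sum_sub_distrib, hcong y]
    rwa [heq] at h0
  have hSEeq : ∑ n, α n * (∫ x, (ψbs n (gradient (ψs n) x) - ψbd n (gradient (ψs n) x)) ∂(P n))
      = ∫ y, (‖y‖ ^ 2 / 2 - ∑ n, α n * ψbd n y) ∂Pbar := by
    calc ∑ n, α n * (∫ x, (ψbs n (gradient (ψs n) x) - ψbd n (gradient (ψs n) x)) ∂(P n))
        = ∑ n, ∫ y, α n * (ψbs n y - ψbd n y) ∂Pbar := by
          refine Finset.sum_congr rfl fun n _ => ?_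
          rw [hEeq n, ← integral_const_mul]
      _ = ∫ y, ∑ n, α n * (ψbs n y - ψbd n y) ∂Pbar :=
          (integral_finset_sum _ (fun n _ => (hGbar_int n).const_mul (α n))).symm
      _ = ∫ y, (‖y‖ ^ 2 / 2 - ∑ n, α n * ψbd n y) ∂Pbar := by
          refine integral_congr_ae (ae_of_all _ fun y => ?_)
          dsimp only
          have h : ∑ n, α n * (ψbs n y - ψbd n y) = ∑ n, (α n * ψbs n y - α n * ψbd n y) :=
            Finset.sum_congr rfl fun n _ => by ring
          rw [h, Finset.sum_sub_distrib, hcong y]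
  -- the positive-part penalty controls the barycenter defect
  have hqcont : Continuous (fun y : EuclideanSpace ℝ (Fin D) =>
      max (∑ n, α n * ψbd n y - ‖y‖ ^ 2 / 2) 0) := by
    apply Continuous.max _ continuous_const
    apply Continuous.sub
    · exact continuous_finset_sum _ (fun n _ => continuous_const.mul (hψbd_diff n).continuous)
    · exact (continuous_norm.pow 2).div_const 2
  have hqmax_int_bar : Integrable
      (fun y => max (∑ n, α n * ψbd n y - ‖y‖ ^ 2 / 2) 0) Pbar := by
    refine Integrable.mono' hφint.abs hqcont.aestronglyMeasurable (ae_of_all _ fun y => ?_)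
    rw [Real.norm_eq_abs]
    have h1 : |max (∑ n, α n * ψbd n y - ‖y‖ ^ 2 / 2) 0|
        ≤ |∑ n, α n * ψbd n y - ‖y‖ ^ 2 / 2| := by
      rcases le_total (∑ n, α n * ψbd n y - ‖y‖ ^ 2 / 2) 0 with h | h
      · rw [max_eq_right h]; simp
      · rw [max_eq_left h]
    rw [abs_sub_comm] at h1
    exact h1
  have hSE_ge : ∫ y, (‖y‖ ^ 2 / 2 - ∑ n, α n * ψbd n y) ∂Pbar
      ≥ - ∫ y, max (∑ n, α n * ψbd n y - ‖y‖ ^ 2 / 2) 0 ∂Pbar := by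
    rw [ge_iff_le, ← integral_neg]
    refine integral_mono hqmax_int_bar.neg hφint (fun y => ?_)
    dsimp only
    have h := le_max_left (∑ n, α n * ψbd n y - ‖y‖ ^ 2 / 2) 0
    linarith
  have hdom' : ∫ y, max (∑ n, α n * ψbd n y - ‖y‖ ^ 2 / 2) 0 ∂Pbar
      ≤ τ * ∫ y, max (∑ n, α n * ψbd n y - ‖y‖ ^ 2 / 2) 0 ∂Phat := by
    have hq0 : ∀ y, (0:ℝ) ≤ max (∑ n, α n * ψbd n y - ‖y‖ ^ 2 / 2) 0 :=
      fun y => le_max_right _ _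
    have h1 : ∫ y, max (∑ n, α n * ψbd n y - ‖y‖ ^ 2 / 2) 0 ∂Pbar
        = (∫⁻ y, ENNReal.ofReal (max (∑ n, α n * ψbd n y - ‖y‖ ^ 2 / 2) 0) ∂Pbar).toReal :=
      integral_eq_lintegral_of_nonneg_ae (ae_of_all _ hq0) hqcont.aestronglyMeasurable
    have h2 : ∫ y, max (∑ n, α n * ψbd n y - ‖y‖ ^ 2 / 2) 0 ∂Phat
        = (∫⁻ y, ENNReal.ofReal (max (∑ n, α n * ψbd n y - ‖y‖ ^ 2 / 2) 0) ∂Phat).toReal :=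
      integral_eq_lintegral_of_nonneg_ae (ae_of_all _ hq0) hqcont.aestronglyMeasurable
    have hμle : Pbar ≤ (ENNReal.ofReal τ) • Phat := by
      refine Measure.le_iff.2 fun s hs => ?_
      simpa [Measure.smul_apply, smul_eq_mul] using hdom s hs
    have h3 : ∫⁻ y, ENNReal.ofReal (max (∑ n, α n * ψbd n y - ‖y‖ ^ 2 / 2) 0) ∂Pbar
        ≤ ENNReal.ofReal τ
          * ∫⁻ y, ENNReal.ofReal (max (∑ n, α n * ψbd n y - ‖y‖ ^ 2 / 2) 0) ∂Phat := by
      calc ∫⁻ y, ENNReal.ofReal (max (∑ n, α n * ψbd n y - ‖y‖ ^ 2 / 2) 0) ∂Pbar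
          ≤ ∫⁻ y, ENNReal.ofReal (max (∑ n, α n * ψbd n y - ‖y‖ ^ 2 / 2) 0)
              ∂((ENNReal.ofReal τ) • Phat) := lintegral_mono' hμle le_rfl
        _ = ENNReal.ofReal τ
              * ∫⁻ y, ENNReal.ofReal (max (∑ n, α n * ψbd n y - ‖y‖ ^ 2 / 2) 0) ∂Phat :=
            lintegral_smul_measure _ _
    have hfin : ∫⁻ y, ENNReal.ofReal (max (∑ n, α n * ψbd n y - ‖y‖ ^ 2 / 2) 0) ∂Phat ≠ ⊤ := by
      have h4 : ∫⁻ y, (‖max (∑ n, α n * ψbd n y - ‖y‖ ^ 2 / 2) 0‖₊ : ENNReal) ∂Phat < ⊤ :=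
        hintM2.hasFiniteIntegral
      have h5 : ∀ y, ENNReal.ofReal (max (∑ n, α n * ψbd n y - ‖y‖ ^ 2 / 2) 0)
          = (‖max (∑ n, α n * ψbd n y - ‖y‖ ^ 2 / 2) 0‖₊ : ENNReal) :=
        fun y => (Real.enorm_eq_ofReal (hq0 y)).symm
      rw [lintegral_congr h5]
      exact h4.ne
    rw [h1, h2]
    have h6 := ENNReal.toReal_mono (ENNReal.mul_ne_top ENNReal.ofReal_ne_top hfin) h3
    rwa [ENNReal.toReal_mul, ENNReal.toReal_ofReal (le_trans zero_le_one hτ)] at h6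
  -- sum up
  have hsum : ∑ n, α n * ((∫ x, (ψbs n (gradient (ψs n) x) - ψbd n (gradient (ψs n) x)) ∂(P n))
        + β / 2 * (∫ x, ‖gradient (ψs n) x - gradient (ψd n) x‖ ^ 2 ∂(P n))
        - c * (∫ x, ‖gradient (ψbd n) (gradient (ψdag n) x) - x‖ ^ 2 ∂(P n)))
      ≤ ∑ n, α n * ((∫ x, (⟪x, gradient (ψdag n) x⟫ - ψbd n (gradient (ψdag n) x)) ∂(P n))
        - ∫ x, ψs n x ∂(P n)) :=
    Finset.sum_le_sum fun n _ => mul_le_mul_of_nonneg_left (hkey n) (hα n).le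
  have hL : ∑ n, α n * ((∫ x, (ψbs n (gradient (ψs n) x) - ψbd n (gradient (ψs n) x)) ∂(P n))
        + β / 2 * (∫ x, ‖gradient (ψs n) x - gradient (ψd n) x‖ ^ 2 ∂(P n))
        - c * (∫ x, ‖gradient (ψbd n) (gradient (ψdag n) x) - x‖ ^ 2 ∂(P n)))
      = (∑ n, α n * (∫ x, (ψbs n (gradient (ψs n) x) - ψbd n (gradient (ψs n) x)) ∂(P n)))
        + β / 2 * (∑ n, α n * ∫ x, ‖gradient (ψs n) x - gradient (ψd n) x‖ ^ 2 ∂(P n))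
        - c * (∑ n, α n * ∫ x, ‖gradient (ψbd n) (gradient (ψdag n) x) - x‖ ^ 2 ∂(P n)) := by
    rw [Finset.mul_sum, Finset.mul_sum, ← Finset.sum_add_distrib, ← Finset.sum_sub_distrib]
    exact Finset.sum_congr rfl fun n _ => by ring
  have hR : ∑ n, α n * ((∫ x, (⟪x, gradient (ψdag n) x⟫ - ψbd n (gradient (ψdag n) x)) ∂(P n))
        - ∫ x, ψs n x ∂(P n))
      = (∑ n, α n * ∫ x, (⟪x, gradient (ψdag n) x⟫ - ψbd n (gradient (ψdag n) x)) ∂(P n))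
        - ∑ n, α n * ∫ x, ψs n x ∂(P n) := by
    rw [← Finset.sum_sub_distrib]
    exact Finset.sum_congr rfl fun n _ => by ring
  have hgoal1 : ∑ n, α n * (lam - c)
        * ∫ x, ‖gradient (ψbd n) (gradient (ψdag n) x) - x‖ ^ 2 ∂(P n)
      = (lam - c) * ∑ n, α n * ∫ x, ‖gradient (ψbd n) (gradient (ψdag n) x) - x‖ ^ 2 ∂(P n) := by
    rw [Finset.mul_sum]
    exact Finset.sum_congr rfl fun n _ => by ring
  have hK0 : 0 ≤ ∑ n, α n * ∫ x, ‖gradient (ψbd n) (gradient (ψdag n) x) - x‖ ^ 2 ∂(P n) :=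
    Finset.sum_nonneg fun n _ => mul_nonneg (hα n).le (integral_nonneg fun x => by positivity)
  have hQ0 : 0 ≤ ∑ n, α n * ∫ x, ‖gradient (ψs n) x - gradient (ψd n) x‖ ^ 2 ∂(P n) :=
    Finset.sum_nonneg fun n _ => mul_nonneg (hα n).le (integral_nonneg fun x => by positivity)
  rw [hL, hR, hSEeq] at hsum
  have hSE2 : ∫ y, (‖y‖ ^ 2 / 2 - ∑ n, α n * ψbd n y) ∂Pbar
      ≥ - (τ * ∫ y, max (∑ n, α n * ψbd n y - ‖y‖ ^ 2 / 2) 0 ∂Phat) := by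
    have hτ0 : (0:ℝ) < τ := lt_of_lt_of_le zero_lt_one hτ
    nlinarith [hSE_ge, hdom']
  have hfirst : Δ ≥ (∑ n, α n * (lam - c) *
        ∫ x, ‖gradient (ψbd n) (gradient (ψdag n) x) - x‖ ^ 2 ∂(P n))
      + β / 2 * ∑ n, α n * ∫ x, ‖gradient (ψs n) x - gradient (ψd n) x‖ ^ 2 ∂(P n) := by
    rw [hΔ, hM, hgoal1]
    have hring : lam
          * (∑ n, α n * ∫ x, ‖gradient (ψbd n) (gradient (ψdag n) x) - x‖ ^ 2 ∂(P n))
        = (lam - c) * (∑ n, α n * ∫ x, ‖gradient (ψbd n) (gradient (ψdag n) x) - x‖ ^ 2 ∂(P n))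
          + c * (∑ n, α n * ∫ x, ‖gradient (ψbd n) (gradient (ψdag n) x) - x‖ ^ 2 ∂(P n)) := by
      ring
    linarith [hsum, hSE2, hring]
  refine ⟨hfirst, ?_⟩
  have hrhs0 : 0 ≤ (∑ n, α n * (lam - c) *
        ∫ x, ‖gradient (ψbd n) (gradient (ψdag n) x) - x‖ ^ 2 ∂(P n))
      + β / 2 * ∑ n, α n * ∫ x, ‖gradient (ψs n) x - gradient (ψd n) x‖ ^ 2 ∂(P n) := by
    have h1 : 0 ≤ ∑ n, α n * (lam - c) *
        ∫ x, ‖gradient (ψbd n) (gradient (ψdag n) x) - x‖ ^ 2 ∂(P n) :=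
      Finset.sum_nonneg fun n _ => mul_nonneg
        (mul_nonneg (hα n).le (sub_nonneg.2 hlam.le))
        (integral_nonneg fun x => by positivity)
    have h2 : 0 ≤ β / 2 * ∑ n, α n * ∫ x, ‖gradient (ψs n) x - gradient (ψd n) x‖ ^ 2 ∂(P n) :=
      mul_nonneg (by positivity) hQ0
    linarith
  linarith [hfirst, hrhs0]
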